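/- For every α > 1/2, the quantity sup_{τ∈ℝ, p∈ℝ²} ∫_{ℝ²×ℝ²} dq dq' (1+|p|²)^α δ(τ + |p+q-q'|² + |q|² - |q'|²) / ((1+|p+q-q'|²)^α (1+|q|²)^α (1+|q'|²)^α) is finite, where the delta function restricts the integral to the surface {(q,q') : τ + |p+q-q'|² + |q|² - |q'|² = 0} with the induced surface measure. -/

import Mathlib

set_option maxHeartbeats 1000000

open MeasureTheory

/-- squared Euclidean norm on ℝ² -/
def nsq (x : ℝ × ℝ) : ℝ := x.1^2 + x.2^2

/-- For fixed `p, q, τ`, the point `q'` on the line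
`{q' : τ + |p+q-q'|² + |q|² - |q'|² = 0}` (equivalently `2 q'·(p+q) = τ + |p+q|² + |q|²`)
whose component along the unit vector `e = (p+q)/|p+q|` is fixed by the delta constraint and
whose orthogonal component (along the rotated vector `e⊥`) is `t`. -/
noncomputable def Qpt (p q : ℝ × ℝ) (τ t : ℝ) : ℝ × ℝ :=
  let R := Real.sqrt (nsq (p + q))
  let e : ℝ × ℝ := (R⁻¹ * (p + q).1, R⁻¹ * (p + q).2)
  let c := (τ + nsq (p + q) + nsq q) / (2 * R)
  (c * e.1 - t * e.2, c * e.2 + t * e.1)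

lemma nsq_nonneg (x : ℝ × ℝ) : 0 ≤ nsq x := by
  have h1 := sq_nonneg x.1; have h2 := sq_nonneg x.2
  unfold nsq; linarith

lemma nsq_pos {x : ℝ × ℝ} (h : x ≠ 0) : 0 < nsq x := by
  rcases (nsq_nonneg x).lt_or_eq with h1 | h1
  · exact h1
  · exfalso
    apply h
    have h2 : x.1 ^ 2 + x.2 ^ 2 = 0 := h1.symm
    have hx1 : x.1 = 0 := by nlinarith [sq_nonneg x.1, sq_nonneg x.2]
    have hx2 : x.2 = 0 := by nlinarith [sq_nonneg x.1, sq_nonneg x.2]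
    have : x = (x.1, x.2) := rfl
    rw [this, hx1, hx2]
    rfl

lemma nsq_le_two (p q : ℝ × ℝ) : nsq p ≤ 2 * nsq (p + q) + 2 * nsq q := by
  have h1 : p.1 = (p + q).1 - q.1 := by simp
  have h2 : p.2 = (p + q).2 - q.2 := by simp
  unfold nsq
  rw [h1, h2]
  nlinarith [sq_nonneg ((p + q).1 + q.1), sq_nonneg ((p + q).2 + q.2)]

lemma nsq_Qpt (p q : ℝ × ℝ) (τ t : ℝ) (h : p + q ≠ 0) :
    nsq (Qpt p q τ t)
      = ((τ + nsq (p + q) + nsq q) / (2 * Real.sqrt (nsq (p + q)))) ^ 2 + t ^ 2 := by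
  have h0 : 0 < nsq (p + q) := nsq_pos h
  have hR : 0 < Real.sqrt (nsq (p + q)) := Real.sqrt_pos.mpr h0
  have hR2 : Real.sqrt (nsq (p + q)) ^ 2 = nsq (p + q) := Real.sq_sqrt h0.le
  have hA : nsq (p + q) = (p + q).1 ^ 2 + (p + q).2 ^ 2 := rfl
  set R := Real.sqrt (nsq (p + q)) with hRdef
  set cc := (τ + nsq (p + q) + nsq q) / (2 * R) with hccdef
  have hq : Qpt p q τ t = (cc * (R⁻¹ * (p + q).1) - t * (R⁻¹ * (p + q).2),
                           cc * (R⁻¹ * (p + q).2) + t * (R⁻¹ * (p + q).1)) := rfl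
  rw [hq]
  show (cc * (R⁻¹ * (p + q).1) - t * (R⁻¹ * (p + q).2)) ^ 2
      + (cc * (R⁻¹ * (p + q).2) + t * (R⁻¹ * (p + q).1)) ^ 2 = cc ^ 2 + t ^ 2
  have expand : (cc * (R⁻¹ * (p + q).1) - t * (R⁻¹ * (p + q).2)) ^ 2
      + (cc * (R⁻¹ * (p + q).2) + t * (R⁻¹ * (p + q).1)) ^ 2
      = (cc ^ 2 + t ^ 2) * ((R⁻¹) ^ 2 * ((p + q).1 ^ 2 + (p + q).2 ^ 2)) := by ring
  rw [expand, ← hA, ← hR2]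
  have hone : (R⁻¹) ^ 2 * R ^ 2 = 1 := by
    field_simp
  rw [hone, mul_one]

lemma nsq_sub_Qpt (p q : ℝ × ℝ) (τ t : ℝ) (h : p + q ≠ 0) :
    nsq (p + q - Qpt p q τ t)
      = (Real.sqrt (nsq (p + q))
          - (τ + nsq (p + q) + nsq q) / (2 * Real.sqrt (nsq (p + q)))) ^ 2 + t ^ 2 := by
  have h0 : 0 < nsq (p + q) := nsq_pos h
  have hR : 0 < Real.sqrt (nsq (p + q)) := Real.sqrt_pos.mpr h0
  have hR2 : Real.sqrt (nsq (p + q)) ^ 2 = nsq (p + q) := Real.sq_sqrt h0.le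
  have hA : nsq (p + q) = (p + q).1 ^ 2 + (p + q).2 ^ 2 := rfl
  set R := Real.sqrt (nsq (p + q)) with hRdef
  set cc := (τ + nsq (p + q) + nsq q) / (2 * R) with hccdef
  have hq : p + q - Qpt p q τ t
      = ((p + q).1 - (cc * (R⁻¹ * (p + q).1) - t * (R⁻¹ * (p + q).2)),
         (p + q).2 - (cc * (R⁻¹ * (p + q).2) + t * (R⁻¹ * (p + q).1))) := rfl
  rw [hq]
  show ((p + q).1 - (cc * (R⁻¹ * (p + q).1) - t * (R⁻¹ * (p + q).2))) ^ 2
      + ((p + q).2 - (cc * (R⁻¹ * (p + q).2) + t * (R⁻¹ * (p + q).1))) ^ 2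
      = (R - cc) ^ 2 + t ^ 2
  have expand : ((p + q).1 - (cc * (R⁻¹ * (p + q).1) - t * (R⁻¹ * (p + q).2))) ^ 2
      + ((p + q).2 - (cc * (R⁻¹ * (p + q).2) + t * (R⁻¹ * (p + q).1))) ^ 2
      = ((1 - cc * R⁻¹) ^ 2 + t ^ 2 * (R⁻¹) ^ 2) * ((p + q).1 ^ 2 + (p + q).2 ^ 2) := by ring
  rw [expand, ← hA, ← hR2]
  have hRne : R ≠ 0 := hR.ne'
  field_simp

lemma prod_denom_ge {r c t : ℝ} (hr : 0 ≤ r) :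
    (1 + r ^ 2 / 4) * (1 + t ^ 2) ≤ (1 + ((r - c) ^ 2 + t ^ 2)) * (1 + (c ^ 2 + t ^ 2)) := by
  rcases le_total c (r / 2) with hc | hc
  · have h1 : r ^ 2 / 4 ≤ (r - c) ^ 2 := by
      nlinarith [mul_nonneg (show (0:ℝ) ≤ r / 2 - c by linarith) (show (0:ℝ) ≤ 3 * r / 2 - c by linarith)]
    nlinarith [sq_nonneg t, sq_nonneg c, mul_nonneg (sq_nonneg t) (sq_nonneg c),
      mul_le_mul_of_nonneg_right h1 (show (0:ℝ) ≤ 1 + (c ^ 2 + t ^ 2) by positivity),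
      mul_nonneg (sq_nonneg t) (sq_nonneg t)]
  · have h1 : r ^ 2 / 4 ≤ c ^ 2 := by
      nlinarith [mul_nonneg (show (0:ℝ) ≤ c - r / 2 by linarith) (show (0:ℝ) ≤ c + r / 2 by linarith)]
    nlinarith [sq_nonneg t, sq_nonneg (r - c), mul_nonneg (sq_nonneg t) (sq_nonneg (r - c)),
      mul_le_mul_of_nonneg_right h1 (show (0:ℝ) ≤ 1 + ((r - c) ^ 2 + t ^ 2) by positivity),
      mul_nonneg (sq_nonneg t) (sq_nonneg t)]

lemma core_frac_le {α N Wq s r c t : ℝ} (hα : 0 ≤ α) (hN : 0 ≤ N) (hW : 1 ≤ Wq)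
    (hr : 0 ≤ r) (hs : r ^ 2 = s) :
    N / ((1 + ((r - c) ^ 2 + t ^ 2)) ^ α * Wq ^ α * (1 + (c ^ 2 + t ^ 2)) ^ α)
      ≤ N * (Wq ^ α)⁻¹ * ((1 + s / 4) ^ α)⁻¹ * ((1 + t ^ 2) ^ α)⁻¹ := by
  have hX : (0:ℝ) < 1 + ((r - c) ^ 2 + t ^ 2) := by positivity
  have hY : (0:ℝ) < 1 + (c ^ 2 + t ^ 2) := by positivity
  have hU : (0:ℝ) < 1 + r ^ 2 / 4 := by positivity
  have hT : (0:ℝ) < 1 + t ^ 2 := by positivity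
  have hW0 : (0:ℝ) < Wq := lt_of_lt_of_le one_pos hW
  have h1 : (1 + r ^ 2 / 4) ^ α * (1 + t ^ 2) ^ α
      ≤ (1 + ((r - c) ^ 2 + t ^ 2)) ^ α * (1 + (c ^ 2 + t ^ 2)) ^ α := by
    rw [← Real.mul_rpow hU.le hT.le, ← Real.mul_rpow hX.le hY.le]
    exact Real.rpow_le_rpow (by positivity) (prod_denom_ge hr) hα
  have h2 : Wq ^ α * ((1 + r ^ 2 / 4) ^ α * (1 + t ^ 2) ^ α)
      ≤ (1 + ((r - c) ^ 2 + t ^ 2)) ^ α * Wq ^ α * (1 + (c ^ 2 + t ^ 2)) ^ α := by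
    calc Wq ^ α * ((1 + r ^ 2 / 4) ^ α * (1 + t ^ 2) ^ α)
        ≤ Wq ^ α * ((1 + ((r - c) ^ 2 + t ^ 2)) ^ α * (1 + (c ^ 2 + t ^ 2)) ^ α) :=
          mul_le_mul_of_nonneg_left h1 (Real.rpow_nonneg hW0.le α)
      _ = _ := by ring
  have hcpos : (0:ℝ) < Wq ^ α * ((1 + r ^ 2 / 4) ^ α * (1 + t ^ 2) ^ α) :=
    mul_pos (Real.rpow_pos_of_pos hW0 α)
      (mul_pos (Real.rpow_pos_of_pos hU α) (Real.rpow_pos_of_pos hT α))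
  have h3 := div_le_div_of_nonneg_left hN hcpos h2
  refine h3.trans_eq ?_
  rw [← hs]
  rw [div_eq_mul_inv, mul_inv, mul_inv]
  ring

/-- Generic 1D integrability from evenness, boundedness-type control near 0,
and power decay at infinity. -/
lemma integrable_of_even_decay {f : ℝ → ℝ} (hmeas : Measurable f) (hnn : ∀ x, 0 ≤ f x)
    (heven : ∀ x, f (-x) = f x) (h01 : IntegrableOn f (Set.Ioc 0 1))
    {C ρ : ℝ} (hC : 0 ≤ C) (hρ : ρ < -1) (htail : ∀ x : ℝ, 1 ≤ x → f x ≤ C * x ^ ρ) :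
    Integrable f := by
  have hIoi1 : IntegrableOn f (Set.Ioi 1) := by
    have hint : IntegrableOn (fun x : ℝ => C * x ^ ρ) (Set.Ioi 1) :=
      (integrableOn_Ioi_rpow_of_lt hρ one_pos).const_mul C
    refine Integrable.mono' hint hmeas.aestronglyMeasurable.restrict ?_
    filter_upwards [ae_restrict_mem measurableSet_Ioi] with x hx
    rw [Real.norm_eq_abs, abs_of_nonneg (hnn x)]
    exact htail x (le_of_lt hx)
  have hIoi0 : IntegrableOn f (Set.Ioi 0) := by
    have hu := h01.union hIoi1
    rwa [Set.Ioc_union_Ioi_eq_Ioi zero_le_one] at hu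
  have hind : Integrable ((Set.Ioi (0:ℝ)).indicator f) :=
    (integrable_indicator_iff measurableSet_Ioi).mpr hIoi0
  have hneg : Integrable (fun x : ℝ => (Set.Ioi (0:ℝ)).indicator f (-x)) := hind.comp_neg
  have hiio : Integrable ((Set.Iio (0:ℝ)).indicator f) := by
    have hfun : (fun x : ℝ => (Set.Ioi (0:ℝ)).indicator f (-x)) = (Set.Iio (0:ℝ)).indicator f := by
      funext x
      by_cases hx : x < 0
      · rw [Set.indicator_of_mem (by simpa using hx : -x ∈ Set.Ioi (0:ℝ)),
          Set.indicator_of_mem (by simpa using hx), heven]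
      · rw [Set.indicator_of_notMem (by simpa using hx),
          Set.indicator_of_notMem (by simpa using hx)]
    rwa [hfun] at hneg
  have hae : f =ᵐ[volume] (Set.Iio (0:ℝ)).indicator f + (Set.Ioi (0:ℝ)).indicator f := by
    have h0 : ∀ᵐ x : ℝ, x ≠ 0 := by
      rw [ae_iff]
      have hset : {x : ℝ | ¬x ≠ 0} = {0} := by ext x; simp
      rw [hset]
      exact Real.volume_singleton
    filter_upwards [h0] with x hx
    rcases lt_or_gt_of_ne hx with h | h
    · simp [Set.indicator_of_mem (by simpa using h : x ∈ Set.Iio (0:ℝ)),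
        Set.indicator_of_notMem (by simp [le_of_lt h] : x ∉ Set.Ioi (0:ℝ))]
    · simp [Set.indicator_of_mem (by simpa using h : x ∈ Set.Ioi (0:ℝ)),
        Set.indicator_of_notMem (by simp [le_of_lt h] : x ∉ Set.Iio (0:ℝ))]
  exact (hiio.add hind).congr hae.symm

lemma inv_le_one_of_one_le' {a : ℝ} (h : 1 ≤ a) : a⁻¹ ≤ 1 := by
  rw [← inv_one]
  exact inv_anti₀ one_pos h

lemma rpow_one_le {s : ℝ} (hs : 0 ≤ s) (x : ℝ) : (1:ℝ) ≤ (1 + x ^ 2) ^ s := by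
  have h1 : (1:ℝ) = 1 ^ s := (Real.one_rpow s).symm
  rw [h1]
  exact Real.rpow_le_rpow zero_le_one (by nlinarith [sq_nonneg x]) hs

lemma integrable_kernel {s : ℝ} (hs : 1/2 < s) :
    Integrable (fun t : ℝ => ((1 + t ^ 2) ^ s)⁻¹) := by
  have hs0 : (0:ℝ) ≤ s := by linarith
  have hmeas : Measurable fun t : ℝ => ((1 + t ^ 2) ^ s)⁻¹ := by
    apply Measurable.inv
    apply Continuous.measurable
    exact (continuous_const.add (continuous_pow 2)).rpow_const (fun x => Or.inr hs0)
  refine integrable_of_even_decay hmeas (fun x => by positivity) (fun x => by rw [neg_sq]) ?_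
    (C := 1) (ρ := -(2 * s)) zero_le_one (by linarith) ?_
  · have hconst : IntegrableOn (fun _ : ℝ => (1:ℝ)) (Set.Ioc (0:ℝ) 1) := by
      apply (integrableOn_const_iff).mpr
      right
      rw [Real.volume_Ioc]
      exact ENNReal.ofReal_lt_top
    refine hconst.mono' hmeas.aestronglyMeasurable.restrict ?_
    refine Filter.Eventually.of_forall fun x => ?_
    rw [Real.norm_eq_abs, abs_of_nonneg (by positivity)]
    exact inv_le_one_of_one_le' (rpow_one_le hs0 x)
  · intro x hx
    have hx0 : (0:ℝ) < x := by linarith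
    have h1 : x ^ (2 * s) ≤ (1 + x ^ 2) ^ s := by
      have hxx : x ^ (2 * s) = (x ^ 2) ^ s := by
        rw [show (2 * s) = (2:ℝ) * s by norm_num, Real.rpow_mul hx0.le,
          show ((2:ℝ)) = ((2:ℕ):ℝ) by norm_num, Real.rpow_natCast]
      rw [hxx]
      exact Real.rpow_le_rpow (by positivity) (by nlinarith) hs0
    have h2 : ((1 + x ^ 2) ^ s)⁻¹ ≤ (x ^ (2 * s))⁻¹ :=
      inv_anti₀ (Real.rpow_pos_of_pos hx0 _) h1
    calc ((1 + x ^ 2) ^ s)⁻¹ ≤ (x ^ (2 * s))⁻¹ := h2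
      _ = 1 * x ^ (-(2 * s)) := by rw [← Real.rpow_neg hx0.le]; ring

lemma integrable_gone {s : ℝ} (hs : 1/2 < s) :
    Integrable (fun x : ℝ => (Real.sqrt |x|)⁻¹ * ((1 + x ^ 2 / 4) ^ (s / 2))⁻¹) := by
  have hs0 : (0:ℝ) ≤ s := by linarith
  have hmeas : Measurable fun x : ℝ => (Real.sqrt |x|)⁻¹ * ((1 + x ^ 2 / 4) ^ (s / 2))⁻¹ := by
    apply Measurable.mul
    · exact (Measurable.sqrt measurable_abs).inv
    · apply Measurable.inv
      apply Continuous.measurable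
      exact (continuous_const.add ((continuous_pow 2).div_const 4)).rpow_const
        (fun x => Or.inr (by linarith))
  have hrpos : ∀ x : ℝ, (0:ℝ) < (1 + x ^ 2 / 4) ^ (s / 2) := fun x =>
    Real.rpow_pos_of_pos (by positivity) _
  refine integrable_of_even_decay hmeas
    (fun x => mul_nonneg (inv_nonneg.mpr (Real.sqrt_nonneg _)) (inv_nonneg.mpr (hrpos x).le))
    (fun x => by rw [abs_neg, neg_sq]) ?_
    (C := 2 ^ s) (ρ := -(1/2) + -s) (Real.rpow_nonneg (by norm_num) s) (by linarith) ?_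
  · -- on Ioc 0 1 bounded by x ^ (-1/2)
    have hint : IntegrableOn (fun x : ℝ => x ^ (-(1/2) : ℝ)) (Set.Ioc (0:ℝ) 1) := by
      have h := intervalIntegral.intervalIntegrable_rpow' (a := 0) (b := 1)
        (r := -(1/2)) (by norm_num)
      rwa [intervalIntegrable_iff, Set.uIoc_of_le zero_le_one] at h
    refine hint.mono' hmeas.aestronglyMeasurable.restrict ?_
    filter_upwards [ae_restrict_mem measurableSet_Ioc] with x hx
    have hx0 : 0 < x := hx.1
    rw [Real.norm_eq_abs, abs_of_nonneg (mul_nonneg (inv_nonneg.mpr (Real.sqrt_nonneg _))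
      (inv_nonneg.mpr (hrpos x).le))]
    have h1 : (Real.sqrt |x|)⁻¹ = x ^ (-(1/2) : ℝ) := by
      rw [abs_of_nonneg hx0.le, Real.rpow_neg hx0.le, Real.sqrt_eq_rpow]
    rw [h1]
    have h2 : ((1 + x ^ 2 / 4) ^ (s / 2))⁻¹ ≤ 1 := by
      apply inv_le_one_of_one_le'
      have : (1:ℝ) = 1 ^ (s/2) := (Real.one_rpow _).symm
      rw [this]
      exact Real.rpow_le_rpow zero_le_one (by nlinarith [sq_nonneg x]) (by linarith)
    calc x ^ (-(1/2) : ℝ) * ((1 + x ^ 2 / 4) ^ (s / 2))⁻¹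
        ≤ x ^ (-(1/2) : ℝ) * 1 := by
          apply mul_le_mul_of_nonneg_left h2 (Real.rpow_nonneg hx0.le _)
      _ = x ^ (-(1/2) : ℝ) := by ring
  · intro x hx
    have hx0 : (0:ℝ) < x := by linarith
    have h1 : (Real.sqrt |x|)⁻¹ = x ^ (-(1/2) : ℝ) := by
      rw [abs_of_nonneg hx0.le, Real.rpow_neg hx0.le, Real.sqrt_eq_rpow]
    have h2 : (x / 2) ^ s ≤ (1 + x ^ 2 / 4) ^ (s / 2) := by
      have e1 : (x / 2) ^ s = ((x / 2) ^ 2) ^ (s / 2) := by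
        rw [← Real.rpow_natCast (x / 2) 2, ← Real.rpow_mul (by positivity)]
        congr 1
        push_cast
        ring
      rw [e1]
      exact Real.rpow_le_rpow (by positivity) (by nlinarith) (by linarith)
    have h3 : ((1 + x ^ 2 / 4) ^ (s / 2))⁻¹ ≤ ((x / 2) ^ s)⁻¹ :=
      inv_anti₀ (Real.rpow_pos_of_pos (by positivity) s) h2
    have h4 : ((x / 2) ^ s)⁻¹ = 2 ^ s * (x ^ s)⁻¹ := by
      rw [Real.div_rpow hx0.le (by norm_num : (0:ℝ) ≤ 2)]
      rw [inv_div]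
      rw [div_eq_mul_inv]
    calc (Real.sqrt |x|)⁻¹ * ((1 + x ^ 2 / 4) ^ (s / 2))⁻¹
        ≤ x ^ (-(1/2) : ℝ) * ((x / 2) ^ s)⁻¹ := by
          rw [h1]
          exact mul_le_mul_of_nonneg_left h3 (Real.rpow_nonneg hx0.le _)
      _ = 2 ^ s * (x ^ (-(1/2) : ℝ) * x ^ (-s)) := by
          rw [h4, ← Real.rpow_neg hx0.le]
          ring
      _ = 2 ^ s * x ^ (-(1/2) + -s) := by
          rw [Real.rpow_add hx0]

lemma volume_singleton_pair (x : ℝ × ℝ) : volume ({x} : Set (ℝ × ℝ)) = 0 := by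
  have h : ({x} : Set (ℝ × ℝ)) = ({x.1} : Set ℝ) ×ˢ ({x.2} : Set ℝ) := by
    ext y; simp [Prod.ext_iff]
  rw [MeasureTheory.Measure.volume_eq_prod, h, MeasureTheory.Measure.prod_prod,
    Real.volume_singleton]
  simp

lemma continuous_nsq : Continuous nsq := by
  unfold nsq
  exact (continuous_fst.pow 2).add (continuous_snd.pow 2)

lemma integrable_H {α : ℝ} (hα : 1/2 < α) :
    Integrable (fun v : ℝ × ℝ => (Real.sqrt (nsq v))⁻¹ * ((1 + nsq v / 4) ^ α)⁻¹) := by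
  have hα0 : (0:ℝ) ≤ α := by linarith
  have h1 : Integrable (fun x : ℝ => (Real.sqrt |x|)⁻¹ * ((1 + x ^ 2 / 4) ^ (α / 2))⁻¹) :=
    integrable_gone hα
  have hprod : Integrable (fun v : ℝ × ℝ =>
      ((Real.sqrt |v.1|)⁻¹ * ((1 + v.1 ^ 2 / 4) ^ (α / 2))⁻¹) *
      ((Real.sqrt |v.2|)⁻¹ * ((1 + v.2 ^ 2 / 4) ^ (α / 2))⁻¹)) := by
    rw [MeasureTheory.Measure.volume_eq_prod]
    exact h1.mul_prod h1
  refine hprod.mono' ?_ ?_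
  · apply Measurable.aestronglyMeasurable
    apply Measurable.mul
    · exact (Real.continuous_sqrt.comp continuous_nsq).measurable.inv
    · apply Measurable.inv
      exact ((continuous_const.add (continuous_nsq.div_const 4)).rpow_const
        (fun v => Or.inr hα0)).measurable
  · have hax : volume {v : ℝ × ℝ | v.1 = 0 ∨ v.2 = 0} = 0 := by
      have hsub : {v : ℝ × ℝ | v.1 = 0 ∨ v.2 = 0}
          ⊆ (({0} : Set ℝ) ×ˢ (Set.univ : Set ℝ)) ∪ ((Set.univ : Set ℝ) ×ˢ ({0} : Set ℝ)) := by
        intro v hv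
        rcases hv with h | h
        · left; exact ⟨h, Set.mem_univ _⟩
        · right; exact ⟨Set.mem_univ _, h⟩
      refine measure_mono_null hsub (measure_union_null ?_ ?_)
      · rw [MeasureTheory.Measure.volume_eq_prod, MeasureTheory.Measure.prod_prod,
          Real.volume_singleton]
        simp
      · rw [MeasureTheory.Measure.volume_eq_prod, MeasureTheory.Measure.prod_prod,
          Real.volume_singleton]
        simp
    have hae : ∀ᵐ v : ℝ × ℝ, ¬(v.1 = 0 ∨ v.2 = 0) := by
      rw [ae_iff]
      have : {v : ℝ × ℝ | ¬¬(v.1 = 0 ∨ v.2 = 0)} = {v : ℝ × ℝ | v.1 = 0 ∨ v.2 = 0} := by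
        ext v; simp only [Set.mem_setOf_eq, not_not]
      rw [this]
      exact hax
    filter_upwards [hae] with v hv
    push_neg at hv
    obtain ⟨h1v, h2v⟩ := hv
    have hv1 : (0:ℝ) < |v.1| := abs_pos.mpr h1v
    have hv2 : (0:ℝ) < |v.2| := abs_pos.mpr h2v
    have hnv : (0:ℝ) < 1 + nsq v / 4 := by linarith [nsq_nonneg v]
    have hnv1 : (0:ℝ) < 1 + v.1 ^ 2 / 4 := by positivity
    have hnv2 : (0:ℝ) < 1 + v.2 ^ 2 / 4 := by positivity
    rw [Real.norm_eq_abs, abs_of_nonneg (mul_nonneg (inv_nonneg.mpr (Real.sqrt_nonneg _))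
      (inv_nonneg.mpr (Real.rpow_nonneg hnv.le α)))]
    have key1 : Real.sqrt |v.1| * Real.sqrt |v.2| ≤ Real.sqrt (nsq v) := by
      rw [← Real.sqrt_mul (abs_nonneg _)]
      apply Real.sqrt_le_sqrt
      have habs : |v.1| * |v.2| = |v.1 * v.2| := (abs_mul _ _).symm
      rw [habs]
      unfold nsq
      rcases abs_cases (v.1 * v.2) with ⟨he, _⟩ | ⟨he, _⟩ <;> rw [he] <;>
        nlinarith [sq_nonneg (v.1 - v.2), sq_nonneg (v.1 + v.2)]
    have key2 : (1 + v.1 ^ 2 / 4) ^ (α / 2) * (1 + v.2 ^ 2 / 4) ^ (α / 2)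
        ≤ (1 + nsq v / 4) ^ α := by
      rw [← Real.mul_rpow hnv1.le hnv2.le]
      have hsq : (1 + v.1 ^ 2 / 4) * (1 + v.2 ^ 2 / 4) ≤ (1 + nsq v / 4) ^ 2 := by
        unfold nsq
        nlinarith [sq_nonneg v.1, sq_nonneg v.2, mul_nonneg (sq_nonneg v.1) (sq_nonneg v.2)]
      calc ((1 + v.1 ^ 2 / 4) * (1 + v.2 ^ 2 / 4)) ^ (α / 2)
          ≤ ((1 + nsq v / 4) ^ 2) ^ (α / 2) :=
            Real.rpow_le_rpow (by positivity) hsq (by linarith)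
        _ = (1 + nsq v / 4) ^ α := by
            rw [← Real.rpow_natCast (1 + nsq v / 4) 2, ← Real.rpow_mul hnv.le]
            congr 1
            push_cast
            ring
    have hs1 : (Real.sqrt (nsq v))⁻¹ ≤ (Real.sqrt |v.1|)⁻¹ * (Real.sqrt |v.2|)⁻¹ := by
      rw [← mul_inv]
      exact inv_anti₀
        (mul_pos (Real.sqrt_pos.mpr hv1) (Real.sqrt_pos.mpr hv2)) key1
    have hs2 : ((1 + nsq v / 4) ^ α)⁻¹
        ≤ ((1 + v.1 ^ 2 / 4) ^ (α / 2))⁻¹ * ((1 + v.2 ^ 2 / 4) ^ (α / 2))⁻¹ := by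
      rw [← mul_inv]
      exact inv_anti₀
        (mul_pos (Real.rpow_pos_of_pos hnv1 _) (Real.rpow_pos_of_pos hnv2 _)) key2
    calc (Real.sqrt (nsq v))⁻¹ * ((1 + nsq v / 4) ^ α)⁻¹
        ≤ ((Real.sqrt |v.1|)⁻¹ * (Real.sqrt |v.2|)⁻¹)
            * (((1 + v.1 ^ 2 / 4) ^ (α / 2))⁻¹ * ((1 + v.2 ^ 2 / 4) ^ (α / 2))⁻¹) := by
          apply mul_le_mul hs1 hs2 (inv_nonneg.mpr (Real.rpow_nonneg hnv.le α))
          exact mul_nonneg (inv_nonneg.mpr (Real.sqrt_nonneg _))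
            (inv_nonneg.mpr (Real.sqrt_nonneg _))
      _ = _ := by ring

/-- The delta-function integral, written after resolving the delta in the `q'` variable:
for fixed `q` the constraint is linear in `q'`, and the surface measure contributes the
Jacobian factor `1/(2|p+q|)`; the remaining one-dimensional integral in the free
coordinate `t` of `q'` is taken, and the result is uniformly bounded in `τ` and `p`. -/
theorem stmt2 (α : ℝ) (hα : 1/2 < α) :
    ∃ C : ℝ, ∀ (τ : ℝ) (p : ℝ × ℝ),
      (∫ q : ℝ × ℝ, if p + q = 0 then 0 else
        (1 / (2 * Real.sqrt (nsq (p + q)))) *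
          ∫ t : ℝ, (1 + nsq p) ^ α /
            ((1 + nsq (p + q - Qpt p q τ t)) ^ α * (1 + nsq q) ^ α *
              (1 + nsq (Qpt p q τ t)) ^ α)) ≤ C := by
  have hα0 : (0:ℝ) ≤ α := by linarith
  set Kc : ℝ := ∫ t : ℝ, ((1 + t ^ 2) ^ α)⁻¹ with hKc
  have hKint : Integrable (fun t : ℝ => ((1 + t ^ 2) ^ α)⁻¹) := integrable_kernel hα
  have hKc0 : 0 ≤ Kc := integral_nonneg fun t => by positivity
  set H : ℝ × ℝ → ℝ := fun v => (Real.sqrt (nsq v))⁻¹ * ((1 + nsq v / 4) ^ α)⁻¹ with hH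
  have hHint : Integrable H := integrable_H hα
  have hH0 : ∀ v, 0 ≤ H v := fun v =>
    mul_nonneg (inv_nonneg.mpr (Real.sqrt_nonneg _))
      (inv_nonneg.mpr (Real.rpow_nonneg (by linarith [nsq_nonneg v]) _))
  set K2 : ℝ := Kc / 2 * 16 ^ α with hK2
  have hK20 : 0 ≤ K2 := mul_nonneg (by linarith) (Real.rpow_nonneg (by norm_num) α)
  refine ⟨K2 * ((∫ v : ℝ × ℝ, H v) + ∫ v : ℝ × ℝ, H v), fun τ p => ?_⟩
  have hHp : Integrable (fun q : ℝ × ℝ => H (p + q)) := hHint.comp_add_left p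
  have hg_int : Integrable (fun q : ℝ × ℝ => K2 * (H (p + q) + H q)) :=
    (hHp.add hHint).const_mul K2
  have key : ∀ q : ℝ × ℝ, q ≠ 0 → p + q ≠ 0 →
      (if p + q = 0 then (0:ℝ) else (1 / (2 * Real.sqrt (nsq (p + q)))) *
        ∫ t : ℝ, (1 + nsq p) ^ α /
          ((1 + nsq (p + q - Qpt p q τ t)) ^ α * (1 + nsq q) ^ α *
            (1 + nsq (Qpt p q τ t)) ^ α))
      ≤ K2 * (H (p + q) + H q) := by
    intro q hq0 hpq
    rw [if_neg hpq]
    have hrpos : 0 < Real.sqrt (nsq (p + q)) := Real.sqrt_pos.mpr (nsq_pos hpq)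
    have hqpos : 0 < Real.sqrt (nsq q) := Real.sqrt_pos.mpr (nsq_pos hq0)
    have hNnn : (0:ℝ) ≤ (1 + nsq p) ^ α := Real.rpow_nonneg (by linarith [nsq_nonneg p]) α
    have hWq1 : (1:ℝ) ≤ 1 + nsq q := by linarith [nsq_nonneg q]
    have hWqpos : (0:ℝ) < 1 + nsq q := by linarith
    have hU : (0:ℝ) < 1 + nsq (p + q) / 4 := by linarith [nsq_nonneg (p + q)]
    have hUq : (0:ℝ) < 1 + nsq q / 4 := by linarith [nsq_nonneg q]
    -- pointwise bound on the inner integrand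
    have hpt : ∀ t : ℝ, (1 + nsq p) ^ α /
          ((1 + nsq (p + q - Qpt p q τ t)) ^ α * (1 + nsq q) ^ α *
            (1 + nsq (Qpt p q τ t)) ^ α)
        ≤ (1 + nsq p) ^ α * ((1 + nsq q) ^ α)⁻¹ * ((1 + nsq (p + q) / 4) ^ α)⁻¹
            * ((1 + t ^ 2) ^ α)⁻¹ := by
      intro t
      rw [nsq_Qpt p q τ t hpq, nsq_sub_Qpt p q τ t hpq]
      exact core_frac_le hα0 hNnn hWq1 (Real.sqrt_nonneg _) (Real.sq_sqrt (nsq_nonneg _))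
    have hptnn : ∀ t : ℝ, 0 ≤ (1 + nsq p) ^ α /
        ((1 + nsq (p + q - Qpt p q τ t)) ^ α * (1 + nsq q) ^ α *
          (1 + nsq (Qpt p q τ t)) ^ α) := by
      intro t
      apply div_nonneg hNnn
      exact mul_nonneg
        (mul_nonneg (Real.rpow_nonneg (by linarith [nsq_nonneg (p + q - Qpt p q τ t)]) α)
          (Real.rpow_nonneg (by linarith [nsq_nonneg q]) α))
        (Real.rpow_nonneg (by linarith [nsq_nonneg (Qpt p q τ t)]) α)
    have hmaj : Integrable (fun t : ℝ =>
        (1 + nsq p) ^ α * ((1 + nsq q) ^ α)⁻¹ * ((1 + nsq (p + q) / 4) ^ α)⁻¹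
          * ((1 + t ^ 2) ^ α)⁻¹) := by
      exact hKint.const_mul _
    have hinner : (∫ t : ℝ, (1 + nsq p) ^ α /
          ((1 + nsq (p + q - Qpt p q τ t)) ^ α * (1 + nsq q) ^ α *
            (1 + nsq (Qpt p q τ t)) ^ α))
        ≤ (1 + nsq p) ^ α * ((1 + nsq q) ^ α)⁻¹ * ((1 + nsq (p + q) / 4) ^ α)⁻¹ * Kc := by
      have h1 := integral_mono_of_nonneg (Filter.Eventually.of_forall hptnn) hmaj
        (Filter.Eventually.of_forall hpt)
      calc (∫ t : ℝ, (1 + nsq p) ^ α /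
          ((1 + nsq (p + q - Qpt p q τ t)) ^ α * (1 + nsq q) ^ α *
            (1 + nsq (Qpt p q τ t)) ^ α))
          ≤ ∫ t : ℝ, (1 + nsq p) ^ α * ((1 + nsq q) ^ α)⁻¹
              * ((1 + nsq (p + q) / 4) ^ α)⁻¹ * ((1 + t ^ 2) ^ α)⁻¹ := h1
        _ = (1 + nsq p) ^ α * ((1 + nsq q) ^ α)⁻¹ * ((1 + nsq (p + q) / 4) ^ α)⁻¹ * Kc :=
            integral_const_mul _ _
    have hstep : (1 / (2 * Real.sqrt (nsq (p + q)))) * (∫ t : ℝ, (1 + nsq p) ^ α /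
          ((1 + nsq (p + q - Qpt p q τ t)) ^ α * (1 + nsq q) ^ α *
            (1 + nsq (Qpt p q τ t)) ^ α))
        ≤ (1 / (2 * Real.sqrt (nsq (p + q)))) *
            ((1 + nsq p) ^ α * ((1 + nsq q) ^ α)⁻¹ * ((1 + nsq (p + q) / 4) ^ α)⁻¹ * Kc) :=
      mul_le_mul_of_nonneg_left hinner (by positivity)
    refine hstep.trans ?_
    rcases le_total (nsq q) (nsq (p + q)) with hcase | hcase
    · -- small |q| : bound by K2 * H q
      have hb : nsq p ≤ 2 * nsq (p + q) + 2 * nsq q := nsq_le_two p q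
      have hb1 : (1 + nsq p) ≤ 16 * (1 + nsq (p + q) / 4) := by linarith
      have hb1' : (1 + nsq p) ^ α ≤ 16 ^ α * (1 + nsq (p + q) / 4) ^ α := by
        rw [← Real.mul_rpow (by norm_num) hU.le]
        exact Real.rpow_le_rpow (by linarith [nsq_nonneg p]) hb1 hα0
      have hb2 : ((1 + nsq q) ^ α)⁻¹ ≤ ((1 + nsq q / 4) ^ α)⁻¹ :=
        inv_anti₀ (Real.rpow_pos_of_pos hUq α)
          (Real.rpow_le_rpow hUq.le (by linarith [nsq_nonneg q]) hα0)
      have hb3 : (1 / (2 * Real.sqrt (nsq (p + q)))) ≤ 1 / 2 * (Real.sqrt (nsq q))⁻¹ := by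
        rw [one_div, mul_inv]
        have hi : (Real.sqrt (nsq (p + q)))⁻¹ ≤ (Real.sqrt (nsq q))⁻¹ :=
          inv_anti₀ hqpos (Real.sqrt_le_sqrt hcase)
        calc (2:ℝ)⁻¹ * (Real.sqrt (nsq (p + q)))⁻¹
            ≤ 2⁻¹ * (Real.sqrt (nsq q))⁻¹ := by
              exact mul_le_mul_of_nonneg_left hi (by norm_num)
          _ = 1 / 2 * (Real.sqrt (nsq q))⁻¹ := by norm_num
      have hmid : (1 + nsq p) ^ α * ((1 + nsq q) ^ α)⁻¹ * ((1 + nsq (p + q) / 4) ^ α)⁻¹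
          ≤ 16 ^ α * ((1 + nsq q / 4) ^ α)⁻¹ := by
        have e1 : (1 + nsq p) ^ α * ((1 + nsq q) ^ α)⁻¹ * ((1 + nsq (p + q) / 4) ^ α)⁻¹
            ≤ (16 ^ α * (1 + nsq (p + q) / 4) ^ α) * ((1 + nsq q / 4) ^ α)⁻¹
                * ((1 + nsq (p + q) / 4) ^ α)⁻¹ := by
          apply mul_le_mul_of_nonneg_right _ (inv_nonneg.mpr (Real.rpow_nonneg hU.le α))
          exact mul_le_mul hb1' hb2 (inv_nonneg.mpr (Real.rpow_nonneg hWqpos.le α))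
            (mul_nonneg (Real.rpow_nonneg (by norm_num) α) (Real.rpow_nonneg hU.le α))
        refine e1.trans_eq ?_
        have hne : (1 + nsq (p + q) / 4) ^ α ≠ 0 := (Real.rpow_pos_of_pos hU α).ne'
        calc 16 ^ α * (1 + nsq (p + q) / 4) ^ α * ((1 + nsq q / 4) ^ α)⁻¹
              * ((1 + nsq (p + q) / 4) ^ α)⁻¹
            = 16 ^ α * ((1 + nsq q / 4) ^ α)⁻¹
                * ((1 + nsq (p + q) / 4) ^ α * ((1 + nsq (p + q) / 4) ^ α)⁻¹) := by ring
          _ = 16 ^ α * ((1 + nsq q / 4) ^ α)⁻¹ := by rw [mul_inv_cancel₀ hne, mul_one]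
      calc (1 / (2 * Real.sqrt (nsq (p + q)))) *
            ((1 + nsq p) ^ α * ((1 + nsq q) ^ α)⁻¹ * ((1 + nsq (p + q) / 4) ^ α)⁻¹ * Kc)
          ≤ (1 / 2 * (Real.sqrt (nsq q))⁻¹) * ((16 ^ α * ((1 + nsq q / 4) ^ α)⁻¹) * Kc) := by
            apply mul_le_mul hb3 (mul_le_mul_of_nonneg_right hmid hKc0) _ (by positivity)
            exact mul_nonneg (mul_nonneg (mul_nonneg hNnn
              (inv_nonneg.mpr (Real.rpow_nonneg hWqpos.le α)))
              (inv_nonneg.mpr (Real.rpow_nonneg hU.le α))) hKc0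
        _ = K2 * H q := by simp only [hK2, hH]; ring
        _ ≤ K2 * (H (p + q) + H q) :=
            mul_le_mul_of_nonneg_left (le_add_of_nonneg_left (hH0 (p + q))) hK20
    · -- small |p+q| : bound by K2 * H (p+q)
      have hb : nsq p ≤ 2 * nsq (p + q) + 2 * nsq q := nsq_le_two p q
      have hb1 : (1 + nsq p) ≤ 16 * (1 + nsq q / 4) := by linarith
      have hb1' : (1 + nsq p) ^ α ≤ 16 ^ α * (1 + nsq q / 4) ^ α := by
        rw [← Real.mul_rpow (by norm_num) hUq.le]
        exact Real.rpow_le_rpow (by linarith [nsq_nonneg p]) hb1 hα0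
      have hb2 : (1 + nsq q / 4) ^ α ≤ (1 + nsq q) ^ α :=
        Real.rpow_le_rpow hUq.le (by linarith [nsq_nonneg q]) hα0
      have hmid : (1 + nsq p) ^ α * ((1 + nsq q) ^ α)⁻¹ * ((1 + nsq (p + q) / 4) ^ α)⁻¹
          ≤ 16 ^ α * ((1 + nsq (p + q) / 4) ^ α)⁻¹ := by
        apply mul_le_mul_of_nonneg_right _ (inv_nonneg.mpr (Real.rpow_nonneg hU.le α))
        have h4 : (1 + nsq p) ^ α ≤ 16 ^ α * (1 + nsq q) ^ α :=
          hb1'.trans (mul_le_mul_of_nonneg_left hb2 (Real.rpow_nonneg (by norm_num) α))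
        calc (1 + nsq p) ^ α * ((1 + nsq q) ^ α)⁻¹
            ≤ (16 ^ α * (1 + nsq q) ^ α) * ((1 + nsq q) ^ α)⁻¹ :=
              mul_le_mul_of_nonneg_right h4 (inv_nonneg.mpr (Real.rpow_nonneg hWqpos.le α))
          _ = 16 ^ α := by
              have hne : (1 + nsq q) ^ α ≠ 0 := (Real.rpow_pos_of_pos hWqpos α).ne'
              rw [mul_assoc, mul_inv_cancel₀ hne, mul_one]
      calc (1 / (2 * Real.sqrt (nsq (p + q)))) *
            ((1 + nsq p) ^ α * ((1 + nsq q) ^ α)⁻¹ * ((1 + nsq (p + q) / 4) ^ α)⁻¹ * Kc)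
          ≤ (1 / (2 * Real.sqrt (nsq (p + q)))) *
              ((16 ^ α * ((1 + nsq (p + q) / 4) ^ α)⁻¹) * Kc) := by
            apply mul_le_mul_of_nonneg_left (mul_le_mul_of_nonneg_right hmid hKc0)
              (by positivity)
        _ = K2 * H (p + q) := by simp only [hK2, hH]; ring
        _ ≤ K2 * (H (p + q) + H q) :=
            mul_le_mul_of_nonneg_left (le_add_of_nonneg_right (hH0 q)) hK20
  -- almost-everywhere comparison and conclusion
  have hae : ∀ᵐ q : ℝ × ℝ, q ≠ 0 ∧ p + q ≠ 0 := by
    rw [ae_iff]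
    refine measure_mono_null ?_
      (measure_union_null (volume_singleton_pair 0) (volume_singleton_pair (-p)))
    intro q hq
    simp only [Set.mem_setOf_eq, not_and_or, not_not] at hq
    simp only [Set.mem_union, Set.mem_singleton_iff]
    rcases hq with h | h
    · left; exact h
    · right; exact eq_neg_of_add_eq_zero_right h
  have hf0 : 0 ≤ᵐ[volume] (fun q : ℝ × ℝ => if p + q = 0 then (0:ℝ) else
      (1 / (2 * Real.sqrt (nsq (p + q)))) *
        ∫ t : ℝ, (1 + nsq p) ^ α /
          ((1 + nsq (p + q - Qpt p q τ t)) ^ α * (1 + nsq q) ^ α *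
            (1 + nsq (Qpt p q τ t)) ^ α)) := by
    refine Filter.Eventually.of_forall fun q => ?_
    dsimp only [Pi.zero_apply]
    by_cases h : p + q = 0
    · simp [h]
    · rw [if_neg h]
      apply mul_nonneg (by positivity)
      apply integral_nonneg
      intro t
      apply div_nonneg (Real.rpow_nonneg (by linarith [nsq_nonneg p]) α)
      exact mul_nonneg
        (mul_nonneg (Real.rpow_nonneg (by linarith [nsq_nonneg (p + q - Qpt p q τ t)]) α)
          (Real.rpow_nonneg (by linarith [nsq_nonneg q]) α))
        (Real.rpow_nonneg (by linarith [nsq_nonneg (Qpt p q τ t)]) α)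
  calc (∫ q : ℝ × ℝ, if p + q = 0 then (0:ℝ) else
        (1 / (2 * Real.sqrt (nsq (p + q)))) *
          ∫ t : ℝ, (1 + nsq p) ^ α /
            ((1 + nsq (p + q - Qpt p q τ t)) ^ α * (1 + nsq q) ^ α *
              (1 + nsq (Qpt p q τ t)) ^ α))
      ≤ ∫ q : ℝ × ℝ, K2 * (H (p + q) + H q) :=
        integral_mono_of_nonneg hf0 hg_int (hae.mono fun q hq => key q hq.1 hq.2)
    _ = K2 * ((∫ q : ℝ × ℝ, H (p + q)) + ∫ q : ℝ × ℝ, H q) := by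
        rw [integral_const_mul]
        rw [integral_add hHp hHint]
    _ = K2 * ((∫ v : ℝ × ℝ, H v) + ∫ v : ℝ × ℝ, H v) := by
        rw [integral_add_left_eq_self]
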